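/- Let A be an m×m complex Hermitian matrix (Aᴴ = A) and B an m×m complex skew-Hermitian matrix (Bᴴ = -B). Then the 2m×2m block matrix Ψ = [[A, -B], [B, A]] is Hermitian, the matrices A - iB and A + iB are Hermitian, and Ψ is positive semidefinite if and only if both A - iB and A + iB are positive semidefinite. -/

import Mathlib

open Matrix
open scoped ComplexOrder

lemma quad_identity (m : ℕ) (A B : Matrix (Fin m) (Fin m) ℂ) (x y : Fin m → ℂ) :
    star (Sum.elim x y) ⬝ᵥ (Matrix.fromBlocks A (-B) B A *ᵥ Sum.elim x y) =
      (1/2 : ℂ) *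
        (star (x - Complex.I • y) ⬝ᵥ ((A - Complex.I • B) *ᵥ (x - Complex.I • y)) +
         star (x + Complex.I • y) ⬝ᵥ ((A + Complex.I • B) *ᵥ (x + Complex.I • y))) := by
  simp only [Function.star_sumElim, fromBlocks_mulVec, sumElim_dotProduct_sumElim,
    mulVec_add, mulVec_sub, mulVec_smul, add_mulVec, sub_mulVec, smul_mulVec,
    neg_mulVec, dotProduct_add, add_dotProduct, dotProduct_sub, sub_dotProduct,
    dotProduct_smul, smul_dotProduct, star_add, star_sub, star_smul, dotProduct_neg,
    neg_dotProduct, smul_eq_mul, Complex.star_def, Complex.conj_I, neg_mul, mul_neg]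
  ring_nf
  simp [Complex.I_sq]
  ring

lemma half_nonneg' {t : ℂ} (h : 0 ≤ 2 * t) : 0 ≤ t := by
  rw [Complex.le_def] at h ⊢
  constructor
  · have := h.1; simp at this ⊢; linarith
  · have := h.2; simp at this ⊢; linarith

/-- For `A` Hermitian and `B` skew-Hermitian, the block matrix
`Ψ = [[A, -B], [B, A]]` is Hermitian, `A - iB` and `A + iB` are Hermitian, and `Ψ` is
positive semidefinite iff both `A - iB` and `A + iB` are positive semidefinite. -/
theorem blockMatrix_posSemidef_iff (m : ℕ) (A B : Matrix (Fin m) (Fin m) ℂ)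
    (hA : A.IsHermitian) (hB : Bᴴ = -B) :
    (Matrix.fromBlocks A (-B) B A).IsHermitian ∧
    (A - Complex.I • B).IsHermitian ∧
    (A + Complex.I • B).IsHermitian ∧
    ((Matrix.fromBlocks A (-B) B A).PosSemidef ↔
      (A - Complex.I • B).PosSemidef ∧ (A + Complex.I • B).PosSemidef) := by
  have hΨ : (Matrix.fromBlocks A (-B) B A).IsHermitian := by
    unfold Matrix.IsHermitian
    rw [fromBlocks_conjTranspose]
    simp [hA.eq, hB]
  have h1 : (A - Complex.I • B).IsHermitian := by
    unfold Matrix.IsHermitian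
    rw [conjTranspose_sub, conjTranspose_smul, hA.eq, hB]
    simp [Complex.conj_I]
  have h2 : (A + Complex.I • B).IsHermitian := by
    unfold Matrix.IsHermitian
    rw [conjTranspose_add, conjTranspose_smul, hA.eq, hB]
    simp [Complex.conj_I]
  refine ⟨hΨ, h1, h2, ?_⟩
  constructor
  · intro h
    constructor
    · refine .of_dotProduct_mulVec_nonneg h1 fun x => ?_
      have key := quad_identity m A B x (Complex.I • x)
      have hx : x - Complex.I • Complex.I • x = (2 : ℂ) • x := by
        ext i; simp [smul_eq_mul]; ring_nf; rw [Complex.I_sq]; ring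
      have hx' : x + Complex.I • Complex.I • x = 0 := by
        ext i; simp [smul_eq_mul]; ring_nf; rw [Complex.I_sq]; ring
      rw [hx, hx'] at key
      have hq := h.dotProduct_mulVec_nonneg (Sum.elim x (Complex.I • x))
      rw [key] at hq
      apply half_nonneg'
      convert hq using 1
      simp [star_smul, smul_dotProduct, dotProduct_smul, mulVec_smul, smul_eq_mul]
    · refine .of_dotProduct_mulVec_nonneg h2 fun x => ?_
      have key := quad_identity m A B x (-(Complex.I • x))
      have hx : x - Complex.I • -(Complex.I • x) = 0 := by
        ext i; simp [smul_eq_mul]; ring_nf; rw [Complex.I_sq]; ring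
      have hx' : x + Complex.I • -(Complex.I • x) = (2 : ℂ) • x := by
        ext i; simp [smul_eq_mul]; ring_nf; rw [Complex.I_sq]; ring
      rw [hx, hx'] at key
      have hq := h.dotProduct_mulVec_nonneg (Sum.elim x (-(Complex.I • x)))
      rw [key] at hq
      apply half_nonneg'
      convert hq using 1
      simp [star_smul, smul_dotProduct, dotProduct_smul, mulVec_smul, smul_eq_mul]
  · rintro ⟨p1, p2⟩
    refine .of_dotProduct_mulVec_nonneg hΨ fun z => ?_
    have hz : z = Sum.elim (z ∘ Sum.inl) (z ∘ Sum.inr) := by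
      ext (i | i) <;> rfl
    rw [hz, quad_identity]
    have t1 := p1.dotProduct_mulVec_nonneg ((z ∘ Sum.inl) - Complex.I • (z ∘ Sum.inr))
    have t2 := p2.dotProduct_mulVec_nonneg ((z ∘ Sum.inl) + Complex.I • (z ∘ Sum.inr))
    have : (0:ℂ) ≤ (1/2 : ℂ) := by rw [Complex.le_def]; norm_num
    exact mul_nonneg this (add_nonneg t1 t2)
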